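/- (Lemma 4, abstract form: Lipschitz gradient of the Gaussian smoothing.) Let l be a positive integer, σ > 0, C > 0, and let F: ℝ^l → ℝ satisfy |F(x) − F(y)| ≤ C‖x − y‖₂ for all x, y. Let γ_l be the standard Gaussian measure on ℝ^l. Define G: ℝ^l → ℝ^l by G(θ) = (1/σ) ∫ F(θ + σε) ε dγ_l(ε). Then for all θ′, θ″ ∈ ℝ^l: ‖G(θ′) − G(θ″)‖₂ ≤ (C√l/σ) ‖θ′ − θ″‖₂. -/

import Mathlib

open MeasureTheory ProbabilityTheory Real

lemma rpow_two_eq (x : ℝ) : x ^ (2:ℝ) = x ^ 2 := by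
  rw [show (2:ℝ) = ((2:ℕ):ℝ) by norm_num, Real.rpow_natCast]

lemma integrable_sq_mul_exp : Integrable (fun x : ℝ => x ^ 2 * Real.exp (-(1/2) * x ^ 2)) := by
  have := integrable_rpow_mul_exp_neg_mul_sq (b := 1/2) (by norm_num) (s := 2) (by norm_num)
  simpa [rpow_two_eq] using this

lemma integrable_id_mul_exp : Integrable (fun x : ℝ => x * Real.exp (-(1/2) * x ^ 2)) := by
  have := integrable_rpow_mul_exp_neg_mul_sq (b := 1/2) (by norm_num) (s := 1) (by norm_num)
  simpa using this

lemma integral_sq_mul_exp : ∫ x : ℝ, x ^ 2 * Real.exp (-(1/2) * x ^ 2) = Real.sqrt (2 * π) := by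
  have hu : ∀ x : ℝ, HasDerivAt (fun y : ℝ => y) 1 x := fun x => hasDerivAt_id x
  have hv : ∀ x : ℝ, HasDerivAt (fun y : ℝ => Real.exp (-(1/2) * y ^ 2))
      (-x * Real.exp (-(1/2) * x ^ 2)) x := by
    intro x
    have h1 : HasDerivAt (fun y : ℝ => -(1/2) * y ^ 2) (-(1/2) * ((2:ℕ) * x ^ 1)) x :=
      (hasDerivAt_pow 2 x).const_mul _
    have := h1.exp
    convert this using 1
    ring
  have huv' : Integrable ((fun y : ℝ => y) * (fun x : ℝ => -x * Real.exp (-(1/2) * x ^ 2))) := by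
    have : ((fun y : ℝ => y) * (fun x : ℝ => -x * Real.exp (-(1/2) * x ^ 2)))
        = fun x : ℝ => -(x ^ 2 * Real.exp (-(1/2) * x ^ 2)) := by
      funext x; simp [Pi.mul_apply]; ring
    rw [this]
    exact integrable_sq_mul_exp.neg
  have hu'v : Integrable ((fun _ : ℝ => (1:ℝ)) * (fun x : ℝ => Real.exp (-(1/2) * x ^ 2))) := by
    have : ((fun _ : ℝ => (1:ℝ)) * (fun x : ℝ => Real.exp (-(1/2) * x ^ 2)))
        = fun x : ℝ => Real.exp (-(1/2) * x ^ 2) := by funext x; simp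
    rw [this]
    exact integrable_exp_neg_mul_sq (by norm_num)
  have huv : Integrable ((fun y : ℝ => y) * (fun x : ℝ => Real.exp (-(1/2) * x ^ 2))) := by
    exact integrable_id_mul_exp
  have key := integral_mul_deriv_eq_deriv_mul_of_integrable (fun x _ => hu x) (fun x _ => hv x) huv' hu'v huv
  have h1 : ∫ x : ℝ, x * (-x * Real.exp (-(1/2) * x ^ 2))
      = - ∫ x : ℝ, x ^ 2 * Real.exp (-(1/2) * x ^ 2) := by
    rw [← integral_neg]
    congr 1; funext x; ring
  have h2 : ∫ x : ℝ, (1:ℝ) * Real.exp (-(1/2) * x ^ 2) = Real.sqrt (2 * π) := by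
    simp only [one_mul]
    rw [integral_gaussian]
    rw [show π / (1/2 : ℝ) = 2 * π by ring]
  rw [h1, h2] at key
  linarith

lemma gaussianPDFReal_zero_one (x : ℝ) :
    gaussianPDFReal 0 1 x = (Real.sqrt (2 * π))⁻¹ * Real.exp (-(1/2) * x ^ 2) := by
  simp only [gaussianPDFReal, NNReal.coe_one, mul_one, sub_zero]
  congr 1
  ring_nf

lemma gaussianReal_withDensity :
    gaussianReal 0 1 = MeasureTheory.volume.withDensity
      (fun x => ((gaussianPDFReal 0 1 x).toNNReal : ENNReal)) := by
  rw [gaussianReal_of_var_ne_zero 0 one_ne_zero]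
  rfl

lemma meas_pdf : Measurable fun x => (gaussianPDFReal 0 1 x).toNNReal :=
  (measurable_gaussianPDFReal 0 1).real_toNNReal

lemma integrable_sq_gaussianReal : Integrable (fun x : ℝ => x ^ 2) (gaussianReal 0 1) := by
  rw [gaussianReal_withDensity]
  rw [integrable_withDensity_iff_integrable_smul meas_pdf]
  have : (fun x : ℝ => (gaussianPDFReal 0 1 x).toNNReal • (x ^ 2))
      = fun x : ℝ => (Real.sqrt (2 * Real.pi))⁻¹ * (x ^ 2 * Real.exp (-(1/2) * x ^ 2)) := by
    funext x
    rw [NNReal.smul_def, smul_eq_mul, Real.coe_toNNReal _ (gaussianPDFReal_nonneg 0 1 x),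
      gaussianPDFReal_zero_one]
    ring
  rw [this]
  exact integrable_sq_mul_exp.const_mul _

lemma integral_sq_gaussianReal : ∫ x : ℝ, x ^ 2 ∂(gaussianReal 0 1) = 1 := by
  rw [gaussianReal_withDensity, integral_withDensity_eq_integral_smul meas_pdf]
  have : (fun x : ℝ => (gaussianPDFReal 0 1 x).toNNReal • (x ^ 2))
      = fun x : ℝ => (Real.sqrt (2 * Real.pi))⁻¹ * (x ^ 2 * Real.exp (-(1/2) * x ^ 2)) := by
    funext x
    rw [NNReal.smul_def, smul_eq_mul, Real.coe_toNNReal _ (gaussianPDFReal_nonneg 0 1 x),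
      gaussianPDFReal_zero_one]
    ring
  rw [this, integral_const_mul, integral_sq_mul_exp]
  rw [inv_mul_cancel₀]
  positivity

/-- The standard Gaussian measure on `ℝ^l` (product of `l` standard one-dimensional
Gaussians, transported to `EuclideanSpace`). -/
noncomputable def stdGaussian (l : ℕ) : Measure (EuclideanSpace ℝ (Fin l)) :=
  (Measure.pi fun _ : Fin l => gaussianReal 0 1).map
    (MeasurableEquiv.toLp 2 (Fin l → ℝ))

lemma pi_map_eval (l : ℕ) (i : Fin l) :
    (Measure.pi fun _ : Fin l => gaussianReal 0 1).map (Function.eval i) = gaussianReal 0 1 := by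
  ext s hs
  rw [Measure.map_apply (measurable_pi_apply i) hs, Set.eval_preimage, Measure.pi_pi]
  rw [Finset.prod_eq_single i]
  · simp
  · intro j _ hj
    simp [Function.update_of_ne hj]
  · simp

lemma integrable_eval_sq (l : ℕ) (i : Fin l) :
    Integrable (fun x : Fin l → ℝ => (x i) ^ 2) (Measure.pi fun _ : Fin l => gaussianReal 0 1) := by
  have h := integrable_sq_gaussianReal
  rw [← pi_map_eval l i] at h
  exact (integrable_map_measure h.aestronglyMeasurable
    (measurable_pi_apply i).aemeasurable).mp h

lemma integral_eval_sq (l : ℕ) (i : Fin l) :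
    ∫ x : Fin l → ℝ, (x i) ^ 2 ∂(Measure.pi fun _ : Fin l => gaussianReal 0 1) = 1 := by
  have : ∫ x : Fin l → ℝ, (x i) ^ 2 ∂(Measure.pi fun _ : Fin l => gaussianReal 0 1)
      = ∫ y : ℝ, y ^ 2 ∂((Measure.pi fun _ : Fin l => gaussianReal 0 1).map (Function.eval i)) := by
    rw [integral_map (measurable_pi_apply i).aemeasurable]
    rw [pi_map_eval]
    exact (measurable_id.pow_const 2).aestronglyMeasurable
  rw [this, pi_map_eval, integral_sq_gaussianReal]

lemma norm_symm_sq (l : ℕ) (x : Fin l → ℝ) :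
    ‖(MeasurableEquiv.toLp 2 (Fin l → ℝ)) x‖ ^ 2 = ∑ i, (x i) ^ 2 := by
  rw [EuclideanSpace.norm_eq, Real.sq_sqrt]
  · congr 1
    funext i
    rw [Real.norm_eq_abs, sq_abs]
    rfl
  · exact Finset.sum_nonneg fun i _ => sq_nonneg _

instance stdGaussian_prob (l : ℕ) : IsProbabilityMeasure (stdGaussian l) :=
  Measure.isProbabilityMeasure_map (MeasurableEquiv.toLp 2 (Fin l → ℝ)).measurable.aemeasurable

lemma integrable_norm_sq_stdGaussian (l : ℕ) :
    Integrable (fun ε : EuclideanSpace ℝ (Fin l) => ‖ε‖ ^ 2) (stdGaussian l) := by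
  rw [_root_.stdGaussian, (MeasurableEquiv.toLp 2 (Fin l → ℝ)).measurableEmbedding.integrable_map_iff]
  have : ((fun ε : EuclideanSpace ℝ (Fin l) => ‖ε‖ ^ 2) ∘ (MeasurableEquiv.toLp 2 (Fin l → ℝ)))
      = fun x : Fin l → ℝ => ∑ i, (x i) ^ 2 := by
    funext x; exact norm_symm_sq l x
  rw [this]
  exact integrable_finset_sum _ fun i _ => integrable_eval_sq l i

lemma integral_norm_sq_stdGaussian (l : ℕ) :
    ∫ ε, ‖ε‖ ^ 2 ∂(stdGaussian l) = l := by
  rw [_root_.stdGaussian, integral_map_equiv]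
  have : (fun x : Fin l → ℝ => ‖(MeasurableEquiv.toLp 2 (Fin l → ℝ)) x‖ ^ 2)
      = fun x : Fin l → ℝ => ∑ i, (x i) ^ 2 := by
    funext x; exact norm_symm_sq l x
  rw [this, integral_finset_sum _ fun i _ => integrable_eval_sq l i]
  simp [integral_eval_sq]

lemma integrable_norm_stdGaussian (l : ℕ) :
    Integrable (fun ε : EuclideanSpace ℝ (Fin l) => ‖ε‖) (stdGaussian l) := by
  refine Integrable.mono' ((integrable_const (1:ℝ)).add (integrable_norm_sq_stdGaussian l))
    continuous_norm.aestronglyMeasurable (ae_of_all _ fun ε => ?_)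
  rw [Real.norm_eq_abs, abs_of_nonneg (norm_nonneg _)]
  simp only [Pi.add_apply]
  rcases le_or_gt ‖ε‖ 1 with h | h
  · nlinarith [sq_nonneg ‖ε‖]
  · nlinarith [norm_nonneg ε]

lemma integral_norm_stdGaussian (l : ℕ) (hl : 0 < l) :
    ∫ ε, ‖ε‖ ∂(stdGaussian l) ≤ Real.sqrt l := by
  have hsl : (0:ℝ) < Real.sqrt l := Real.sqrt_pos.mpr (by exact_mod_cast hl)
  have hbound : ∀ ε : EuclideanSpace ℝ (Fin l),
      ‖ε‖ ≤ (2 * Real.sqrt l)⁻¹ * ‖ε‖ ^ 2 + Real.sqrt l / 2 := by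
    intro ε
    have h := sq_nonneg (‖ε‖ - Real.sqrt l)
    have h2 : Real.sqrt l * Real.sqrt l = l := Real.mul_self_sqrt (by positivity)
    rw [sub_sq] at h
    have : 2 * Real.sqrt l * ‖ε‖ ≤ ‖ε‖ ^ 2 + l := by nlinarith
    have h3 : (0:ℝ) < 2 * Real.sqrt l := by positivity
    rw [div_eq_mul_inv, ← sub_nonneg]
    have key : (2 * Real.sqrt l)⁻¹ * ‖ε‖ ^ 2 + Real.sqrt l * 2⁻¹ - ‖ε‖
        = ((‖ε‖ ^ 2 + l) - 2 * Real.sqrt l * ‖ε‖) * (2 * Real.sqrt l)⁻¹ := by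
      field_simp
      nlinarith
    rw [key]
    have h4 : (0:ℝ) ≤ (2 * Real.sqrt l)⁻¹ := by positivity
    nlinarith
  have hint : Integrable (fun ε : EuclideanSpace ℝ (Fin l) =>
      (2 * Real.sqrt l)⁻¹ * ‖ε‖ ^ 2 + Real.sqrt l / 2) (stdGaussian l) :=
    ((integrable_norm_sq_stdGaussian l).const_mul _).add (integrable_const _)
  have := integral_mono (integrable_norm_stdGaussian l) hint hbound
  rw [integral_add ((integrable_norm_sq_stdGaussian l).const_mul _) (integrable_const _),
    integral_const_mul, integral_norm_sq_stdGaussian, integral_const] at this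
  simp only [probReal_univ, smul_eq_mul, one_mul] at this
  calc ∫ ε, ‖ε‖ ∂(stdGaussian l) ≤ (2 * Real.sqrt l)⁻¹ * l + Real.sqrt l / 2 := this
    _ = Real.sqrt l := by
        have h2 : Real.sqrt l * Real.sqrt l = l := Real.mul_self_sqrt (by positivity)
        field_simp
        nlinarith

/-- Lemma 4 (abstract form): if `F` is `C`-Lipschitz, then the ES-gradient
`G(θ) = (1/σ) ∫ F(θ + σε) ε dγ_l(ε)` is `(C√l/σ)`-Lipschitz. -/
theorem stmt15 (l : ℕ) (hl : 0 < l) (σ C : ℝ) (hσ : 0 < σ) (hC : 0 < C)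
    (F : EuclideanSpace ℝ (Fin l) → ℝ)
    (hF : ∀ x y, |F x - F y| ≤ C * ‖x - y‖) :
    ∀ θ' θ'' : EuclideanSpace ℝ (Fin l),
      ‖(σ⁻¹ • ∫ ε, F (θ' + σ • ε) • ε ∂(stdGaussian l))
          - σ⁻¹ • ∫ ε, F (θ'' + σ • ε) • ε ∂(stdGaussian l)‖
        ≤ C * Real.sqrt l / σ * ‖θ' - θ''‖ := by
  intro θ' θ''
  have hFc : Continuous F := by
    refine (LipschitzWith.of_dist_le_mul (K := ⟨C, hC.le⟩) fun x y => ?_).continuous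
    rw [Real.dist_eq, dist_eq_norm]
    exact hF x y
  have hInt : ∀ θ : EuclideanSpace ℝ (Fin l),
      Integrable (fun ε : EuclideanSpace ℝ (Fin l) => F (θ + σ • ε) • ε) (stdGaussian l) := by
    intro θ
    refine Integrable.mono'
      (((integrable_norm_stdGaussian l).const_mul |F θ|).add
        ((integrable_norm_sq_stdGaussian l).const_mul (C * σ)))
      (show Continuous (fun ε : EuclideanSpace ℝ (Fin l) => F (θ + σ • ε) • ε) by
        fun_prop).aestronglyMeasurable
      (ae_of_all _ fun ε => ?_)
    rw [norm_smul, Real.norm_eq_abs]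
    have h1 : |F (θ + σ • ε)| ≤ |F θ| + C * σ * ‖ε‖ := by
      have h2 := hF (θ + σ • ε) θ
      have h3 : (θ + σ • ε) - θ = σ • ε := by abel
      rw [h3, norm_smul, Real.norm_eq_abs, abs_of_pos hσ] at h2
      have h4 : |F (θ + σ • ε)| ≤ |F θ| + |F (θ + σ • ε) - F θ| := by
        calc |F (θ + σ • ε)| = |F θ + (F (θ + σ • ε) - F θ)| := by ring_nf
          _ ≤ |F θ| + |F (θ + σ • ε) - F θ| := abs_add_le _ _
      calc |F (θ + σ • ε)| ≤ |F θ| + |F (θ + σ • ε) - F θ| := h4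
        _ ≤ |F θ| + C * σ * ‖ε‖ := by nlinarith
    calc |F (θ + σ • ε)| * ‖ε‖ ≤ (|F θ| + C * σ * ‖ε‖) * ‖ε‖ :=
          mul_le_mul_of_nonneg_right h1 (norm_nonneg _)
      _ = |F θ| * ‖ε‖ + C * σ * ‖ε‖ ^ 2 := by ring
  rw [← smul_sub, ← integral_sub (hInt θ') (hInt θ'')]
  rw [norm_smul, Real.norm_eq_abs, abs_of_pos (inv_pos.mpr hσ)]
  have hkey : ‖∫ ε, (F (θ' + σ • ε) • ε - F (θ'' + σ • ε) • ε) ∂(stdGaussian l)‖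
      ≤ C * ‖θ' - θ''‖ * Real.sqrt l := by
    calc ‖∫ ε, (F (θ' + σ • ε) • ε - F (θ'' + σ • ε) • ε) ∂(stdGaussian l)‖
        ≤ ∫ ε, ‖F (θ' + σ • ε) • ε - F (θ'' + σ • ε) • ε‖ ∂(stdGaussian l) :=
          norm_integral_le_integral_norm _
      _ ≤ ∫ ε, (C * ‖θ' - θ''‖) * ‖ε‖ ∂(stdGaussian l) := by
          refine integral_mono ((hInt θ').sub (hInt θ'')).norm
            ((integrable_norm_stdGaussian l).const_mul _) fun ε => ?_
          rw [← sub_smul, norm_smul, Real.norm_eq_abs]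
          refine mul_le_mul_of_nonneg_right ?_ (norm_nonneg _)
          have := hF (θ' + σ • ε) (θ'' + σ • ε)
          have h3 : (θ' + σ • ε) - (θ'' + σ • ε) = θ' - θ'' := by abel
          rwa [h3] at this
      _ = (C * ‖θ' - θ''‖) * ∫ ε, ‖ε‖ ∂(stdGaussian l) := integral_const_mul _ _
      _ ≤ (C * ‖θ' - θ''‖) * Real.sqrt l := by
          refine mul_le_mul_of_nonneg_left (integral_norm_stdGaussian l hl) ?_
          positivity
  calc σ⁻¹ * ‖∫ ε, (F (θ' + σ • ε) • ε - F (θ'' + σ • ε) • ε) ∂(stdGaussian l)‖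
      ≤ σ⁻¹ * (C * ‖θ' - θ''‖ * Real.sqrt l) :=
        mul_le_mul_of_nonneg_left hkey (by positivity)
    _ = C * Real.sqrt l / σ * ‖θ' - θ''‖ := by field_simp
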